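/- If f has L-Lipschitz gradient, η ≤ 1/(4L), θ ∈ [0,1], and the heavy ball update x^{k+1} = x^k - η∇f(x^k) + (1-θ)(x^k - x^{k-1}) is performed, then f(x^{k+1}) ≤ f(x^k) - (η/4)‖∇f(x^k)‖² + (3/(4η))‖x^k - x^{k-1}‖². -/

import Mathlib

open scoped RealInnerProductSpace

lemma descent_lemma {d : ℕ} (f : EuclideanSpace ℝ (Fin d) → ℝ)
    (f' : EuclideanSpace ℝ (Fin d) → EuclideanSpace ℝ (Fin d))
    (L : ℝ) (hL : 0 ≤ L)
    (hgrad : ∀ x, HasGradientAt f (f' x) x)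
    (hlip : ∀ x y, ‖f' x - f' y‖ ≤ L * ‖x - y‖)
    (x y : EuclideanSpace ℝ (Fin d)) :
    f y ≤ f x + ⟪f' x, y - x⟫ + L / 2 * ‖y - x‖ ^ 2 := by
  set v := y - x with hv
  set φ : ℝ → ℝ := fun t => f (x + t • v) - t * ⟪f' x, v⟫ - L / 2 * t ^ 2 * ‖v‖ ^ 2 with hφ
  have hφ' : ∀ t : ℝ, HasDerivAt φ
      (⟪f' (x + t • v), v⟫ - ⟪f' x, v⟫ - L * t * ‖v‖ ^ 2) t := by
    intro t
    have hline : HasDerivAt (fun t : ℝ => x + t • v) v t := by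
      simpa using ((hasDerivAt_id t).smul_const v).const_add x
    have hcomp : HasDerivAt (fun t : ℝ => f (x + t • v)) ⟪f' (x + t • v), v⟫ t := by
      have := (hgrad (x + t • v)).hasFDerivAt.comp_hasDerivAt t hline
      simp at this
      exact this
    have h2 : HasDerivAt (fun t : ℝ => t * ⟪f' x, v⟫) ⟪f' x, v⟫ t := by
      simpa using (hasDerivAt_id t).mul_const ⟪f' x, v⟫
    have h3 : HasDerivAt (fun t : ℝ => L / 2 * t ^ 2 * ‖v‖ ^ 2) (L * t * ‖v‖ ^ 2) t := by
      have := ((hasDerivAt_pow 2 t).const_mul (L / 2)).mul_const (‖v‖ ^ 2)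
      convert this using 1
      · rfl
      · rfl
      · simp only [Nat.cast_ofNat, show (2:ℕ) - 1 = 1 from rfl, pow_one]
        ring
    exact (hcomp.sub h2).sub h3
  have hanti : AntitoneOn φ (Set.Icc (0:ℝ) 1) := by
    apply antitoneOn_of_deriv_nonpos (convex_Icc 0 1)
    · exact fun t _ => (hφ' t).continuousAt.continuousWithinAt
    · exact fun t _ => ((hφ' t).differentiableAt).differentiableWithinAt
    · intro t ht
      rw [interior_Icc] at ht
      rw [(hφ' t).deriv]
      have h1 : ⟪f' (x + t • v) - f' x, v⟫ ≤ ‖f' (x + t • v) - f' x‖ * ‖v‖ :=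
        real_inner_le_norm _ _
      have h2 : ‖f' (x + t • v) - f' x‖ ≤ L * (t * ‖v‖) := by
        have := hlip (x + t • v) x
        simpa [norm_smul, abs_of_nonneg ht.1.le] using this
      have h3 : ‖f' (x + t • v) - f' x‖ * ‖v‖ ≤ L * (t * ‖v‖) * ‖v‖ :=
        mul_le_mul_of_nonneg_right h2 (norm_nonneg _)
      have h4 : ⟪f' (x + t • v) - f' x, v⟫ = ⟪f' (x + t • v), v⟫ - ⟪f' x, v⟫ :=
        inner_sub_left _ _ _
      nlinarith [sq_nonneg ‖v‖]
  have := hanti (Set.left_mem_Icc.2 zero_le_one) (Set.right_mem_Icc.2 zero_le_one) zero_le_one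
  simp only [hφ, zero_smul, add_zero, one_smul, zero_mul, mul_zero, sub_zero, one_mul,
    one_pow, mul_one] at this
  have hy : x + v = y := by rw [hv]; abel
  rw [hy] at this
  linarith


/-- One heavy ball step: f(x^{k+1}) ≤ f(x^k) - (η/4)‖∇f(x^k)‖² + (3/(4η))‖x^k - x^{k-1}‖². -/
theorem stmt_9 {d : ℕ} (f : EuclideanSpace ℝ (Fin d) → ℝ)
    (f' : EuclideanSpace ℝ (Fin d) → EuclideanSpace ℝ (Fin d))
    (L η θ : ℝ) (hL : 0 < L)
    (hgrad : ∀ x, HasGradientAt f (f' x) x)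
    (hlip : ∀ x y, ‖f' x - f' y‖ ≤ L * ‖x - y‖)
    (hη0 : 0 < η) (hη : η ≤ 1 / (4 * L))
    (hθ0 : 0 ≤ θ) (hθ1 : θ ≤ 1)
    (xprev xk xnext : EuclideanSpace ℝ (Fin d))
    (hstep : xnext = xk - η • f' xk + (1 - θ) • (xk - xprev)) :
    f xnext ≤ f xk - (η / 4) * ‖f' xk‖ ^ 2 + (3 / (4 * η)) * ‖xk - xprev‖ ^ 2 := by
  have hd := descent_lemma f f' L hL.le hgrad hlip xk xnext
  set g := f' xk
  set v := xk - xprev with hv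
  have hD : xnext - xk = (1 - θ) • v - η • g := by
    rw [hstep]; abel
  have hinner : ⟪g, xnext - xk⟫ = (1 - θ) * ⟪g, v⟫ - η * ‖g‖ ^ 2 := by
    rw [hD, inner_sub_right, inner_smul_right, inner_smul_right,
      real_inner_self_eq_norm_sq]
  have hnorm : ‖xnext - xk‖ ≤ (1 - θ) * ‖v‖ + η * ‖g‖ := by
    rw [hD]
    calc ‖(1 - θ) • v - η • g‖ ≤ ‖(1 - θ) • v‖ + ‖η • g‖ := norm_sub_le _ _
    _ = (1 - θ) * ‖v‖ + η * ‖g‖ := by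
        rw [norm_smul, norm_smul, Real.norm_eq_abs, Real.norm_eq_abs,
          abs_of_nonneg (by linarith), abs_of_nonneg hη0.le]
  have hip : ⟪g, v⟫ ≤ ‖g‖ * ‖v‖ := real_inner_le_norm _ _
  have h4L : (0:ℝ) < 4 * L := by positivity
  have hLη : L * η ≤ 1 / 4 := by
    rw [le_div_iff₀ h4L] at hη
    nlinarith
  have hsq : ‖xnext - xk‖ ^ 2 ≤ ((1 - θ) * ‖v‖ + η * ‖g‖) ^ 2 := by
    apply sq_le_sq' _ hnorm
    nlinarith [norm_nonneg (xnext - xk)]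
  have ha : (0:ℝ) ≤ ‖g‖ := norm_nonneg _
  have hb : (0:ℝ) ≤ ‖v‖ := norm_nonneg _
  rw [hinner] at hd
  have hL2 : L / 2 * ‖xnext - xk‖ ^ 2 ≤ L / 2 * ((1 - θ) * ‖v‖ + η * ‖g‖) ^ 2 :=
    mul_le_mul_of_nonneg_left hsq (by linarith)
  have h1 : (1 - θ) * ⟪g, v⟫ ≤ (1 - θ) * (‖g‖ * ‖v‖) :=
    mul_le_mul_of_nonneg_left hip (by linarith)
  have key : (1 - θ) * ⟪g, v⟫ - η * ‖g‖ ^ 2 + L / 2 * ((1 - θ) * ‖v‖ + η * ‖g‖) ^ 2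
      ≤ -(η / 4) * ‖g‖ ^ 2 + 3 / (4 * η) * ‖v‖ ^ 2 := by
    rw [show -(η / 4) * ‖g‖ ^ 2 + 3 / (4 * η) * ‖v‖ ^ 2
        = (-(η ^ 2 * ‖g‖ ^ 2) + 3 * ‖v‖ ^ 2) / (4 * η) by field_simp]
    rw [le_div_iff₀ (by positivity)]
    nlinarith [mul_nonneg (by linarith : (0:ℝ) ≤ 1 / 2 - 2 * L * η)
        (sq_nonneg ((1 - θ) * ‖v‖ + η * ‖g‖)),
      mul_le_mul_of_nonneg_left h1 hη0.le,
      mul_nonneg (mul_nonneg hθ0 (by linarith : (0:ℝ) ≤ 2 - θ)) (sq_nonneg ‖v‖),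
      mul_nonneg (mul_nonneg (mul_nonneg hθ0 hη0.le) ha) hb,
      sq_nonneg (η * ‖g‖ - ‖v‖), sq_nonneg (η * ‖g‖ + ‖v‖), mul_pos hη0 hη0]
  linarith
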